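/- Let 𝓛 be a category with zero morphisms equipped with a pre-summability structure (S, π₀, π₁, σ) satisfying (S-wit), with flip c_X ∈ 𝓛(S²X, S²X). If f₀, f₁ ∈ 𝓛(X,Y) are summable, then S(f₀) and S(f₁) ∈ 𝓛(S X, S Y) are summable, with witness ⟨S f₀, S f₁⟩ = c_Y∘S(⟨f₀,f₁⟩), and S(f₀) + S(f₁) = S(f₀ + f₁). -/
import Mathlib


open CategoryTheory Limits

universe v u

/-- A pre-summability structure on a category with zero morphisms: a functor `S`
together with jointly monic natural transformations `π₀, π₁ : S ⟶ 𝟭 C` and a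
natural transformation `σ : S ⟶ 𝟭 C`. -/
structure PreSummability (C : Type u) [Category.{v} C] [HasZeroMorphisms C] where
  S : C ⥤ C
  π0 : S ⟶ 𝟭 C
  π1 : S ⟶ 𝟭 C
  σ : S ⟶ 𝟭 C
  jointly_monic : ∀ {Y X : C} (f g : Y ⟶ S.obj X),
    f ≫ π0.app X = g ≫ π0.app X → f ≫ π1.app X = g ≫ π1.app X → f = g

namespace PreSummability

variable {C : Type u} [Category.{v} C] [HasZeroMorphisms C] (P : PreSummability C)

/-- Two morphisms are summable when they admit a (necessarily unique) witness. -/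
def Summable {Y X : C} (f₀ f₁ : Y ⟶ X) : Prop :=
  ∃ h : Y ⟶ P.S.obj X, h ≫ P.π0.app X = f₀ ∧ h ≫ P.π1.app X = f₁

/-- The witness `⟨f₀, f₁⟩` of a summable pair (an arbitrary value if the pair is
not summable). -/
noncomputable def witness {Y X : C} (f₀ f₁ : Y ⟶ X) : Y ⟶ P.S.obj X :=
  @dite _ (P.Summable f₀ f₁) (Classical.propDecidable _) (fun h => h.choose) (fun _ => 0)

/-- The sum `f₀ + f₁ = σ ∘ ⟨f₀, f₁⟩` of a summable pair. -/
noncomputable def sum {Y X : C} (f₀ f₁ : Y ⟶ X) : Y ⟶ X :=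
  P.witness f₀ f₁ ≫ P.σ.app X

/-- Projections indexed by a boolean. -/
def pr (i : Bool) : P.S ⟶ 𝟭 C := if i then P.π1 else P.π0

/-- Axiom (S-com): `π₁` and `π₀` are summable with `π₁ + π₀ = σ`. -/
def SCom : Prop := ∀ X : C,
  P.Summable (P.π1.app X) (P.π0.app X) ∧ P.sum (P.π1.app X) (P.π0.app X) = P.σ.app X

/-- Axiom (S-zero): `0` and `id` are summable with `0 + id = id`. -/
def SZero : Prop := ∀ X : C,
  P.Summable (0 : X ⟶ X) (𝟙 X) ∧ P.sum (0 : X ⟶ X) (𝟙 X) = 𝟙 X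

/-- Axiom (S-wit): if `σ∘f₀` and `σ∘f₁` are summable then `f₀` and `f₁` are summable. -/
def SWit : Prop := ∀ (X Y : C) (f₀ f₁ : X ⟶ P.S.obj Y),
  P.Summable (f₀ ≫ P.σ.app Y) (f₁ ≫ P.σ.app Y) → P.Summable f₀ f₁

end PreSummability

open PreSummability

namespace PreSummability

variable {C : Type u} [Category.{v} C] [HasZeroMorphisms C] (P : PreSummability C)

lemma pr_false : P.pr false = P.π0 := rfl

lemma pr_true : P.pr true = P.π1 := rfl

lemma witness_spec {Y X : C} {f₀ f₁ : Y ⟶ X} (hs : P.Summable f₀ f₁) :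
    P.witness f₀ f₁ ≫ P.π0.app X = f₀ ∧ P.witness f₀ f₁ ≫ P.π1.app X = f₁ := by
  unfold witness
  rw [dif_pos hs]
  exact hs.choose_spec

lemma jointly_monic' {Y X : C} (f g : Y ⟶ P.S.obj X)
    (hp : ∀ i : Bool, f ≫ (P.pr i).app X = g ≫ (P.pr i).app X) : f = g :=
  P.jointly_monic f g (by simpa [P.pr_false] using hp false)
    (by simpa [P.pr_true] using hp true)

lemma witness_unique {Y X : C} {f₀ f₁ : Y ⟶ X} (w : Y ⟶ P.S.obj X)
    (h0 : w ≫ P.π0.app X = f₀) (h1 : w ≫ P.π1.app X = f₁) :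
    P.witness f₀ f₁ = w := by
  have hs : P.Summable f₀ f₁ := ⟨w, h0, h1⟩
  obtain ⟨w0, w1⟩ := P.witness_spec hs
  exact P.jointly_monic _ _ (by rw [w0, h0]) (by rw [w1, h1])

lemma pr_natural {A B : C} (i : Bool) (g : A ⟶ B) :
    P.S.map g ≫ (P.pr i).app B = (P.pr i).app A ≫ g := by
  simpa using (P.pr i).naturality g

lemma sigma_natural {A B : C} (g : A ⟶ B) :
    P.S.map g ≫ P.σ.app B = P.σ.app A ≫ g := by
  simpa using P.σ.naturality g

end PreSummability

section Stmt9Aux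

variable {C : Type u} [Category.{v} C] [HasZeroMorphisms C] (P : PreSummability C)

lemma stmt9_key (c : ∀ X : C, P.S.obj (P.S.obj X) ⟶ P.S.obj (P.S.obj X))
    (hc : ∀ (X : C) (i j : Bool),
      c X ≫ (P.pr j).app (P.S.obj X) ≫ (P.pr i).app X =
        (P.pr i).app (P.S.obj X) ≫ (P.pr j).app X)
    (Z : C) (i : Bool) :
    c Z ≫ P.S.map ((P.pr i).app Z) = (P.pr i).app (P.S.obj Z) := by
  apply P.jointly_monic'
  intro j
  rw [Category.assoc, P.pr_natural j ((P.pr i).app Z)]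
  exact hc Z i j

end Stmt9Aux

theorem stmt9 {C : Type u} [Category.{v} C] [HasZeroMorphisms C]
    (P : PreSummability C) (hwit : P.SWit)
    (c : ∀ X : C, P.S.obj (P.S.obj X) ⟶ P.S.obj (P.S.obj X))
    (hnat : ∀ {X Y : C} (f : X ⟶ Y),
      P.S.map (P.S.map f) ≫ c Y = c X ≫ P.S.map (P.S.map f))
    (hc : ∀ (X : C) (i j : Bool),
      c X ≫ (P.pr j).app (P.S.obj X) ≫ (P.pr i).app X =
        (P.pr i).app (P.S.obj X) ≫ (P.pr j).app X)
    {X Y : C} (f₀ f₁ : X ⟶ Y) (hs : P.Summable f₀ f₁) :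
    P.Summable (P.S.map f₀) (P.S.map f₁) ∧
    P.witness (P.S.map f₀) (P.S.map f₁) = P.S.map (P.witness f₀ f₁) ≫ c Y ∧
    P.sum (P.S.map f₀) (P.S.map f₁) = P.S.map (P.sum f₀ f₁) := by
  classical
  set h := P.witness f₀ f₁ with hh
  obtain ⟨h0, h1⟩ := P.witness_spec hs
  have hf : ∀ i : Bool, h ≫ (P.pr i).app Y = (if i then f₁ else f₀) := by
    intro i; cases i
    · simpa [P.pr_false] using h0
    · simpa [P.pr_true] using h1
  set w : P.S.obj X ⟶ P.S.obj (P.S.obj Y) := P.S.map h ≫ c Y with hw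
  have key := stmt9_key P c hc
  have wproj : ∀ i : Bool,
      w ≫ (P.pr i).app (P.S.obj Y) = P.S.map (if i then f₁ else f₀) := by
    intro i
    apply P.jointly_monic'
    intro j
    calc (w ≫ (P.pr i).app (P.S.obj Y)) ≫ (P.pr j).app Y
        = P.S.map h ≫ (c Y ≫ (P.pr i).app (P.S.obj Y) ≫ (P.pr j).app Y) := by
          rw [hw]; simp only [Category.assoc]
      _ = P.S.map h ≫ ((P.pr j).app (P.S.obj Y) ≫ (P.pr i).app Y) := by
          rw [hc Y j i]
      _ = ((P.pr j).app X ≫ h) ≫ (P.pr i).app Y := by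
          rw [← Category.assoc, P.pr_natural j h]
      _ = (P.pr j).app X ≫ (if i then f₁ else f₀) := by
          rw [Category.assoc, hf i]
      _ = P.S.map (if i then f₁ else f₀) ≫ (P.pr j).app Y := by
          rw [P.pr_natural j]
  have w0 : w ≫ P.π0.app (P.S.obj Y) = P.S.map f₀ := by
    simpa [P.pr_false] using wproj false
  have w1 : w ≫ P.π1.app (P.S.obj Y) = P.S.map f₁ := by
    simpa [P.pr_true] using wproj true
  have hsum : P.Summable (P.S.map f₀) (P.S.map f₁) := ⟨w, w0, w1⟩
  have hwitEq : P.witness (P.S.map f₀) (P.S.map f₁) = w := P.witness_unique w w0 w1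
  refine ⟨hsum, hwitEq, ?_⟩
  have hcs : c Y ≫ P.σ.app (P.S.obj Y) = P.S.map (P.σ.app Y) := by
    apply P.jointly_monic'
    intro j
    calc (c Y ≫ P.σ.app (P.S.obj Y)) ≫ (P.pr j).app Y
        = c Y ≫ (P.σ.app (P.S.obj Y) ≫ (P.pr j).app Y) := by
          simp only [Category.assoc]
      _ = c Y ≫ (P.S.map ((P.pr j).app Y) ≫ P.σ.app Y) := by
          congr 1
          exact (P.sigma_natural ((P.pr j).app Y)).symm
      _ = (P.pr j).app (P.S.obj Y) ≫ P.σ.app Y := by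
          rw [← Category.assoc, key Y j]
      _ = P.S.map (P.σ.app Y) ≫ (P.pr j).app Y :=
          (P.pr_natural j (P.σ.app Y)).symm
  show P.witness (P.S.map f₀) (P.S.map f₁) ≫ P.σ.app (P.S.obj Y) =
    P.S.map (h ≫ P.σ.app Y)
  rw [hwitEq, hw, Category.assoc, hcs, P.S.map_comp]
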